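/- Fix a natural number m ≥ 1, let f : (−2, 2) → ℝ be f(ζ) = (4 − ζ²)^{m − 1/2} (real power), and define g : (−2, 2) → ℝ by g(ζ) = √(4 − ζ²) · f^{(m)}(ζ). Then g satisfies the Vieta–Lucas differential equation: (4 − ζ²)·g''(ζ) − ζ·g'(ζ) + m²·g(ζ) = 0 for all ζ ∈ (−2, 2). -/

import Mathlib

open Real Set

private lemma contDiffAt_deriv_of_top {F : ℝ → ℝ} {x : ℝ} (h : ContDiffAt ℝ (⊤ : ℕ∞) F x) :
    ContDiffAt ℝ (⊤ : ℕ∞) (deriv F) x :=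
  (h.fderiv_right (by simp)).clm_apply contDiffAt_const

theorem rodrigues_function_satisfies_vieta_lucas_ode (m : ℕ) (hm : 1 ≤ m)
    (f g : ℝ → ℝ) (hf : ∀ ζ : ℝ, f ζ = (4 - ζ ^ 2) ^ ((m : ℝ) - 1 / 2))
    (hg : ∀ ζ : ℝ, g ζ = Real.sqrt (4 - ζ ^ 2) * iteratedDeriv m f ζ) :
    ∀ ζ ∈ Set.Ioo (-2 : ℝ) 2,
      (4 - ζ ^ 2) * iteratedDeriv 2 g ζ - ζ * deriv g ζ + (m : ℝ) ^ 2 * g ζ = 0 := by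
  set S : Set ℝ := Set.Ioo (-2 : ℝ) 2 with hS
  have hopen : IsOpen S := isOpen_Ioo
  have hu : ∀ ζ ∈ S, (0:ℝ) < 4 - ζ ^ 2 := by
    rintro ζ ⟨h1, h2⟩; nlinarith
  -- smoothness of f on S
  have hfc : ∀ ζ ∈ S, ContDiffAt ℝ (⊤ : ℕ∞) f ζ := by
    intro ζ hζ
    have hb : ContDiffAt ℝ (⊤ : ℕ∞) (fun x : ℝ => 4 - x ^ 2) ζ :=
      (contDiff_const.sub (contDiff_id.pow 2)).contDiffAt
    have hr : ContDiffAt ℝ (⊤ : ℕ∞) (fun x : ℝ => x ^ ((m : ℝ) - 1 / 2)) (4 - ζ ^ 2) :=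
      Real.contDiffAt_rpow_const_of_ne (hu ζ hζ).ne'
    have := hr.comp ζ hb
    exact this.congr_of_eventuallyEq (by filter_upwards with x; rw [hf x]; rfl)
  have hsmooth : ∀ n : ℕ, ∀ ζ ∈ S, ContDiffAt ℝ (⊤ : ℕ∞) (iteratedDeriv n f) ζ := by
    intro n
    induction n with
    | zero => simpa [iteratedDeriv_zero] using hfc
    | succ n ih =>
      intro ζ hζ
      rw [iteratedDeriv_succ]
      exact contDiffAt_deriv_of_top (ih ζ hζ)
  have hD : ∀ n : ℕ, ∀ ζ ∈ S, HasDerivAt (iteratedDeriv n f)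
      (iteratedDeriv (n + 1) f ζ) ζ := by
    intro n ζ hζ
    rw [iteratedDeriv_succ]
    exact ((hsmooth n ζ hζ).differentiableAt (by simp)).hasDerivAt
  -- inner function derivative
  have hq : ∀ ζ : ℝ, HasDerivAt (fun x : ℝ => 4 - x ^ 2) (-2 * ζ) ζ := by
    intro ζ
    have := (hasDerivAt_const ζ (4:ℝ)).sub (hasDerivAt_pow 2 ζ)
    exact (this.congr_deriv (by norm_num) : HasDerivAt (fun x : ℝ => 4 - x ^ 2) (-2 * ζ) ζ)
  -- Pearson identity
  have hP : ∀ ζ ∈ S, (4 - ζ ^ 2) * deriv f ζ = (1 - 2 * (m:ℝ)) * ζ * f ζ := by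
    intro ζ hζ
    have hfd : HasDerivAt f
        (((m:ℝ) - 1/2) * (4 - ζ ^ 2) ^ ((m:ℝ) - 1/2 - 1) * (-2 * ζ)) ζ := by
      have hr := Real.hasDerivAt_rpow_const (p := (m:ℝ) - 1/2) (Or.inl (hu ζ hζ).ne')
      have := hr.comp ζ (hq ζ)
      refine HasDerivAt.congr_of_eventuallyEq ?_ (by filter_upwards with x; rw [hf x])
      simpa [mul_assoc, Function.comp_def] using this
    have hpow : (4 - ζ ^ 2) ^ ((m:ℝ) - 1/2) =
        (4 - ζ ^ 2) ^ ((m:ℝ) - 1/2 - 1) * (4 - ζ ^ 2) := by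
      rw [show ((m:ℝ) - 1/2) = ((m:ℝ) - 1/2 - 1) + 1 by ring,
        Real.rpow_add_one (hu ζ hζ).ne']
      ring_nf
    rw [hfd.deriv, hf ζ, hpow]; ring
  -- the differentiated Pearson family
  have hB : ∀ n : ℕ, ∀ ζ ∈ S, (4 - ζ ^ 2) * iteratedDeriv (n + 2) f ζ =
      (2 * (n:ℝ) + 3 - 2 * m) * ζ * iteratedDeriv (n + 1) f ζ
        - ((n:ℝ) + 1) * (2 * m - 1 - n) * iteratedDeriv n f ζ := by
    intro n
    induction n with
    | zero =>
      intro ζ hζ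
      have hL : HasDerivAt (fun x => (4 - x ^ 2) * deriv f x)
          ((-2 * ζ) * deriv f ζ + (4 - ζ ^ 2) * iteratedDeriv 2 f ζ) ζ := by
        have h1 : HasDerivAt (fun x => deriv f x) (iteratedDeriv 2 f ζ) ζ := by
          have := hD 1 ζ hζ
          simpa [iteratedDeriv_one] using this
        exact (hq ζ).mul h1
      have hR : HasDerivAt (fun x => (1 - 2 * (m:ℝ)) * x * f x)
          ((1 - 2 * (m:ℝ)) * f ζ + (1 - 2 * (m:ℝ)) * ζ * deriv f ζ) ζ := by
        have h1 : HasDerivAt (fun x => f x) (deriv f ζ) ζ := by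
          have := hD 0 ζ hζ
          simpa [iteratedDeriv_zero, iteratedDeriv_one] using this
        have := ((hasDerivAt_id' (𝕜 := ℝ) (x := ζ)).const_mul (1 - 2 * (m:ℝ))).mul h1
        exact (this.congr_deriv (by ring) : HasDerivAt (fun x => (1 - 2 * (m:ℝ)) * x * f x)
            ((1 - 2 * (m:ℝ)) * f ζ + (1 - 2 * (m:ℝ)) * ζ * deriv f ζ) ζ)
      have heq : deriv (fun x => (4 - x ^ 2) * deriv f x) ζ
          = deriv (fun x => (1 - 2 * (m:ℝ)) * x * f x) ζ := by
        apply Filter.EventuallyEq.deriv_eq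
        filter_upwards [hopen.mem_nhds hζ] with x hx
        exact hP x hx
      rw [hL.deriv, hR.deriv] at heq
      have hf0 : iteratedDeriv 0 f ζ = f ζ := by rw [iteratedDeriv_zero]
      have hf1 : iteratedDeriv 1 f ζ = deriv f ζ := by rw [iteratedDeriv_one]
      push_cast
      rw [hf0, hf1]
      linear_combination heq
    | succ n ih =>
      intro ζ hζ
      have hL : HasDerivAt (fun x => (4 - x ^ 2) * iteratedDeriv (n + 2) f x)
          ((-2 * ζ) * iteratedDeriv (n + 2) f ζ + (4 - ζ ^ 2) * iteratedDeriv (n + 3) f ζ) ζ :=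
        (hq ζ).mul (hD (n + 2) ζ hζ)
      have hR : HasDerivAt (fun x => (2 * (n:ℝ) + 3 - 2 * m) * x * iteratedDeriv (n + 1) f x
            - ((n:ℝ) + 1) * (2 * m - 1 - n) * iteratedDeriv n f x)
          (((2 * (n:ℝ) + 3 - 2 * m) * iteratedDeriv (n + 1) f ζ
              + (2 * (n:ℝ) + 3 - 2 * m) * ζ * iteratedDeriv (n + 2) f ζ)
            - ((n:ℝ) + 1) * (2 * m - 1 - n) * iteratedDeriv (n + 1) f ζ) ζ := by
        have h1 := ((hasDerivAt_id' (𝕜 := ℝ) (x := ζ)).const_mul (2 * (n:ℝ) + 3 - 2 * m)).mul (hD (n + 1) ζ hζ)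
        have h2 := (hD n ζ hζ).const_mul (((n:ℝ) + 1) * (2 * m - 1 - n))
        have := h1.sub h2
        exact this.congr_deriv (by ring)
      have heq : deriv (fun x => (4 - x ^ 2) * iteratedDeriv (n + 2) f x) ζ
          = deriv (fun x => (2 * (n:ℝ) + 3 - 2 * m) * x * iteratedDeriv (n + 1) f x
              - ((n:ℝ) + 1) * (2 * m - 1 - n) * iteratedDeriv n f x) ζ := by
        apply Filter.EventuallyEq.deriv_eq
        filter_upwards [hopen.mem_nhds hζ] with x hx
        exact ih x hx
      rw [hL.deriv, hR.deriv] at heq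
      have key := ih ζ hζ
      push_cast
      have e3 : n + 1 + 2 = n + 3 := by omega
      have e2 : n + 1 + 1 = n + 2 := by omega
      rw [e3, e2]
      linear_combination heq
  -- final computation
  intro ζ hζ
  have hupos := hu ζ hζ
  have hsne : Real.sqrt (4 - ζ ^ 2) ≠ 0 := (Real.sqrt_pos.mpr hupos).ne'
  have hsq : Real.sqrt (4 - ζ ^ 2) ^ 2 = 4 - ζ ^ 2 := Real.sq_sqrt hupos.le
  have hsqrtD : ∀ x ∈ S, HasDerivAt (fun y => Real.sqrt (4 - y ^ 2))
      (-x / Real.sqrt (4 - x ^ 2)) x := by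
    intro x hx
    have hx0 : (4 - x ^ 2) ≠ 0 := (hu x hx).ne'
    have hxs : Real.sqrt (4 - x ^ 2) ≠ 0 := (Real.sqrt_pos.mpr (hu x hx)).ne'
    have h1 := (Real.hasDerivAt_sqrt hx0).comp x (hq x)
    have h2 : 1 / (2 * Real.sqrt (4 - x ^ 2)) * (-2 * x) = -x / Real.sqrt (4 - x ^ 2) := by
      field_simp
    rw [h2] at h1
    exact h1
  have hgD : ∀ x ∈ S, HasDerivAt g
      (-x / Real.sqrt (4 - x ^ 2) * iteratedDeriv m f x
        + Real.sqrt (4 - x ^ 2) * iteratedDeriv (m + 1) f x) x := by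
    intro x hx
    have := (hsqrtD x hx).mul (hD m x hx)
    exact this.congr_of_eventuallyEq (by filter_upwards with y; rw [hg y]; rfl)
  set G1 : ℝ → ℝ := fun y => -y / Real.sqrt (4 - y ^ 2) * iteratedDeriv m f y
      + Real.sqrt (4 - y ^ 2) * iteratedDeriv (m + 1) f y with hG1
  have hG1D : HasDerivAt G1
      ((((-1) * Real.sqrt (4 - ζ ^ 2) - (-ζ) * (-ζ / Real.sqrt (4 - ζ ^ 2))) /
          Real.sqrt (4 - ζ ^ 2) ^ 2) * iteratedDeriv m f ζ
        + (-ζ / Real.sqrt (4 - ζ ^ 2)) * iteratedDeriv (m + 1) f ζ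
        + ((-ζ / Real.sqrt (4 - ζ ^ 2)) * iteratedDeriv (m + 1) f ζ
          + Real.sqrt (4 - ζ ^ 2) * iteratedDeriv (m + 1 + 1) f ζ)) ζ := by
    have hneg : HasDerivAt (fun y : ℝ => -y) (-1) ζ := (hasDerivAt_id' (𝕜 := ℝ) (x := ζ)).neg
    have h1 := ((hneg.div (hsqrtD ζ hζ) hsne).mul (hD m ζ hζ)).add
      ((hsqrtD ζ hζ).mul (hD (m + 1) ζ hζ))
    exact h1
  have h2 : iteratedDeriv 2 g ζ = deriv G1 ζ := by
    rw [show (2:ℕ) = 1 + 1 from rfl, iteratedDeriv_succ, iteratedDeriv_one]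
    apply Filter.EventuallyEq.deriv_eq
    filter_upwards [hopen.mem_nhds hζ] with x hx
    exact (hgD x hx).deriv
  have key := hB m ζ hζ
  rw [show m + 1 + 1 = m + 2 from rfl] at hG1D
  rw [hg ζ, (hgD ζ hζ).deriv, h2, hG1D.deriv]
  set s := Real.sqrt (4 - ζ ^ 2)
  set a := iteratedDeriv m f ζ
  set b := iteratedDeriv (m + 1) f ζ
  set c := iteratedDeriv (m + 2) f ζ
  field_simp
  linear_combination s ^ 4 * key + (a * (s ^ 2 + ζ ^ 2) + 2 * ζ * s ^ 2 * b) * hsq
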